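/- Let n ≥ 4 and let a, b ∈ A_n be doubly pure with ‖a‖ = ‖b‖ = 1, with b ∈ H_a^⊥, and suppose (a,a,b) = 0 and (a,b,b) = 0. Then the real-linear map from the quaternions ℍ to A_n determined by 1 ↦ e_0, i ↦ a, j ↦ b, k ↦ a·b is an injective ℝ-algebra homomorphism; in particular the linear span of {e_0, a, b, a·b} is a subalgebra of A_n isomorphic to ℍ. -/

import Mathlib

noncomputable section

open scoped Quaternion

/-- The Cayley–Dickson algebra `A n = ℝ^(2^n)` as a type. -/
def CD : ℕ → Type
  | 0 => ℝ
  | n + 1 => CD n × CD n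

namespace CD

instance instAddCommGroup : (n : ℕ) → AddCommGroup (CD n)
  | 0 => inferInstanceAs (AddCommGroup ℝ)
  | n + 1 =>
    letI := instAddCommGroup n
    inferInstanceAs (AddCommGroup (CD n × CD n))

instance instModule : (n : ℕ) → Module ℝ (CD n)
  | 0 => inferInstanceAs (Module ℝ ℝ)
  | n + 1 =>
    letI := instModule n
    inferInstanceAs (Module ℝ (CD n × CD n))

/-- Conjugation in the Cayley–Dickson algebra. -/
def conj : {n : ℕ} → CD n → CD n
  | 0, x => x
  | _ + 1, x => (conj x.1, -x.2)

/-- Cayley–Dickson multiplication. -/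
def mul : {n : ℕ} → CD n → CD n → CD n
  | 0, x, y => Mul.mul (α := ℝ) x y
  | _ + 1, x, y =>
    (mul x.1 y.1 - mul (conj y.2) x.2, mul y.2 x.1 + mul x.2 (conj y.1))

instance instMul (n : ℕ) : Mul (CD n) := ⟨mul⟩

/-- The multiplicative unit `e₀`. -/
def one : {n : ℕ} → CD n
  | 0 => (1 : ℝ)
  | _ + 1 => (one, 0)

instance instOne (n : ℕ) : One (CD n) := ⟨one⟩

/-- The Euclidean inner product on `A n = ℝ^(2^n)`. -/
def inner : {n : ℕ} → CD n → CD n → ℝ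
  | 0, x, y => (x * y : ℝ)
  | _ + 1, x, y => inner x.1 y.1 + inner x.2 y.2

/-- The Euclidean norm on `A n = ℝ^(2^n)`. -/
def norm {n : ℕ} (x : CD n) : ℝ := Real.sqrt (inner x x)

/-- `ã = (-a₂, a₁)`. -/
def tilde {n : ℕ} (a : CD (n + 1)) : CD (n + 1) := (-a.2, a.1)

/-- `ẽ₀ = (0, e₀)`. -/
def etilde (n : ℕ) : CD (n + 1) := ((0 : CD n), (1 : CD n))

/-- An element is pure if its conjugate is its negative. -/
def IsPure {n : ℕ} (a : CD n) : Prop := conj a = -a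

/-- An element of `A (n+1)` is doubly pure if both of its coordinates are pure. -/
def IsDoublyPure {n : ℕ} (a : CD (n + 1)) : Prop := IsPure a.1 ∧ IsPure a.2

/-- The associator `(a,b,c) = (ab)c - a(bc)`. -/
def assoc {n : ℕ} (a b c : CD n) : CD n := a * b * c - a * (b * c)

/-- An element is alternative if `(a,a,x) = 0` for all `x`. -/
def IsAlternative {n : ℕ} (a : CD n) : Prop := ∀ x : CD n, assoc a a x = 0

/-- An element is strongly alternative if `(a,a,x) = 0` and `(a,x,x) = 0` for all `x`. -/
def IsStronglyAlternative {n : ℕ} (a : CD n) : Prop :=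
  (∀ x : CD n, assoc a a x = 0) ∧ (∀ x : CD n, assoc a x x = 0)

/-- The pure (imaginary) part of an element. -/
def im {n : ℕ} (a : CD n) : CD n := (2⁻¹ : ℝ) • (a - conj a)

/-- `H a`, the span of `{e₀, ã, a, ẽ₀}`. -/
def H {n : ℕ} (a : CD (n + 1)) : Submodule ℝ (CD (n + 1)) :=
  Submodule.span ℝ {(1 : CD (n + 1)), tilde a, a, etilde n}

/-- The orthogonal complement of `H a`. -/
def Hperp {n : ℕ} (a : CD (n + 1)) : Set (CD (n + 1)) :=
  {x | ∀ y ∈ H a, inner y x = 0}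

end CD

namespace CD
variable {n : ℕ}

lemma ext' {x y : CD (n+1)} (h1 : x.1 = y.1) (h2 : x.2 = y.2) : x = y := Prod.ext h1 h2

lemma mul_def (x y : CD (n+1)) :
    x * y = (x.1 * y.1 - conj y.2 * x.2, y.2 * x.1 + x.2 * conj y.1) := rfl
lemma one_def : (1 : CD (n+1)) = ((1 : CD n), 0) := rfl
lemma zero_def : (0 : CD (n+1)) = ((0 : CD n), 0) := rfl
lemma conj_def (x : CD (n+1)) : conj x = (conj x.1, -x.2) := rfl
lemma inner_def (x y : CD (n+1)) : inner x y = inner x.1 y.1 + inner x.2 y.2 := rfl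
lemma add_def (x y : CD (n+1)) : x + y = (x.1 + y.1, x.2 + y.2) := rfl
lemma neg_def (x : CD (n+1)) : -x = (-x.1, -x.2) := rfl
lemma sub_def (x y : CD (n+1)) : x - y = (x.1 - y.1, x.2 - y.2) := rfl
lemma smul_def (r : ℝ) (x : CD (n+1)) : r • x = (r • x.1, r • x.2) := rfl

lemma zero_def0 : (0 : CD 0) = (0 : ℝ) := rfl
lemma one_def0 : (1 : CD 0) = (1 : ℝ) := rfl
lemma add_def0 (x y : CD 0) : x + y = (x + y : ℝ) := rfl
lemma neg_def0 (x : CD 0) : -x = (-x : ℝ) := rfl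
lemma smul_def0 (r : ℝ) (x : CD 0) : r • x = r * (show ℝ from x) := rfl
lemma mul_def0 (x y : CD 0) : x * y = (x * y : ℝ) := rfl
lemma conj_def0 (x : CD 0) : conj x = x := rfl
lemma inner_def0 (x y : CD 0) : inner x y = (x * y : ℝ) := rfl

lemma conj_zero : ∀ {n : ℕ}, conj (0 : CD n) = 0
  | 0 => rfl
  | n + 1 => ext' (conj_zero (n := n)) (by show -(0:CD n) = 0; simp)

lemma conj_one : ∀ {n : ℕ}, conj (1 : CD n) = 1
  | 0 => rfl
  | n + 1 => ext' (conj_one (n := n)) (by show -(0:CD n) = 0; simp)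

lemma conj_add : ∀ {n : ℕ} (x y : CD n), conj (x + y) = conj x + conj y
  | 0, _, _ => rfl
  | n + 1, x, y => ext' (conj_add x.1 y.1) (by show -(x.2+y.2) = -x.2 + -y.2; abel)

lemma conj_neg : ∀ {n : ℕ} (x : CD n), conj (-x) = -conj x
  | 0, _ => rfl
  | n + 1, x => ext' (conj_neg x.1) rfl

lemma conj_smul : ∀ {n : ℕ} (r : ℝ) (x : CD n), conj (r • x) = r • conj x
  | 0, _, _ => rfl
  | n + 1, r, x => ext' (conj_smul r x.1) (by show -(r • x.2) = r • (-x.2); simp)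

lemma conj_conj : ∀ {n : ℕ} (x : CD n), conj (conj x) = x
  | 0, _ => rfl
  | n + 1, x => ext' (conj_conj x.1) (by show -(-x.2) = x.2; simp)

lemma conj_sub {n : ℕ} (x y : CD n) : conj (x - y) = conj x - conj y := by
  rw [sub_eq_add_neg, conj_add, conj_neg, sub_eq_add_neg]

private lemma zero_mul_mul_zero : ∀ {n : ℕ}, (∀ x : CD n, (0 : CD n) * x = 0) ∧ (∀ x : CD n, x * (0 : CD n) = 0)
  | 0 => ⟨fun x => MulZeroClass.zero_mul (M₀ := ℝ) x, fun x => MulZeroClass.mul_zero (M₀ := ℝ) x⟩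
  | n + 1 => by
      obtain ⟨hz, hz'⟩ := zero_mul_mul_zero (n := n)
      constructor
      · intro x
        rw [mul_def]
        refine ext' ?_ ?_
        · show (0:CD n) * x.1 - conj x.2 * 0 = 0
          rw [hz, hz']; simp
        · show x.2 * (0:CD n) + (0:CD n) * conj x.1 = 0
          rw [hz, hz']; simp
      · intro x
        rw [mul_def]
        refine ext' ?_ ?_
        · show x.1 * (0:CD n) - conj (0:CD n) * x.2 = 0
          rw [hz', conj_zero, hz]; simp
        · show (0:CD n) * x.1 + x.2 * conj (0:CD n) = 0
          rw [hz, conj_zero, hz']; simp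

lemma zero_mul' {n : ℕ} (x : CD n) : (0 : CD n) * x = 0 := zero_mul_mul_zero.1 x
lemma mul_zero' {n : ℕ} (x : CD n) : x * (0 : CD n) = 0 := zero_mul_mul_zero.2 x

lemma mul_one' : ∀ {n : ℕ} (x : CD n), x * (1 : CD n) = x
  | 0, x => mul_one (M := ℝ) x
  | n + 1, x => by
      rw [mul_def, one_def]
      refine ext' ?_ ?_
      · show x.1 * (1:CD n) - conj (0:CD n) * x.2 = x.1
        rw [mul_one', conj_zero, zero_mul']; simp
      · show (0:CD n) * x.1 + x.2 * conj (1:CD n) = x.2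
        rw [zero_mul', conj_one, mul_one']; simp

lemma one_mul' : ∀ {n : ℕ} (x : CD n), (1 : CD n) * x = x
  | 0, x => one_mul (M := ℝ) x
  | n + 1, x => by
      rw [mul_def, one_def]
      refine ext' ?_ ?_
      · show (1:CD n) * x.1 - conj x.2 * 0 = x.1
        rw [one_mul', mul_zero']; simp
      · show x.2 * (1:CD n) + (0:CD n) * conj x.1 = x.2
        rw [mul_one', zero_mul']; simp


private lemma mul_distrib : ∀ {n : ℕ}, (∀ x y z : CD n, (x + y) * z = x * z + y * z)
    ∧ (∀ x y z : CD n, x * (y + z) = x * y + x * z)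
  | 0 => ⟨fun x y z => add_mul (R := ℝ) x y z, fun x y z => mul_add (R := ℝ) x y z⟩
  | n + 1 => by
      obtain ⟨hl, hr⟩ := mul_distrib (n := n)
      constructor
      · intro x y z
        rw [mul_def, mul_def, mul_def, add_def]
        refine ext' ?_ ?_
        · show (x.1 + y.1) * z.1 - conj z.2 * (x.2 + y.2) = _
          rw [hl, hr]; show _ = (x.1*z.1 - conj z.2 * x.2) + (y.1*z.1 - conj z.2*y.2); abel
        · show z.2 * (x.1 + y.1) + (x.2 + y.2) * conj z.1 = _
          rw [hr, hl]; show _ = (z.2*x.1 + x.2*conj z.1) + (z.2*y.1 + y.2*conj z.1); abel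
      · intro x y z
        rw [mul_def, mul_def, mul_def, add_def]
        refine ext' ?_ ?_
        · show x.1 * (y.1 + z.1) - conj (y.2 + z.2) * x.2 = _
          rw [hr, conj_add, hl]
          show _ = (x.1*y.1 - conj y.2 * x.2) + (x.1*z.1 - conj z.2*x.2); abel
        · show (y.2 + z.2) * x.1 + x.2 * conj (y.1 + z.1) = _
          rw [hl, conj_add, hr]
          show _ = (y.2*x.1 + x.2*conj y.1) + (z.2*x.1 + x.2*conj z.1); abel

lemma add_mul' {n : ℕ} (x y z : CD n) : (x + y) * z = x * z + y * z := mul_distrib.1 x y z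
lemma mul_add' {n : ℕ} (x y z : CD n) : x * (y + z) = x * y + x * z := mul_distrib.2 x y z

private lemma mul_smul_distrib : ∀ {n : ℕ}, (∀ (r : ℝ) (x y : CD n), (r • x) * y = r • (x * y))
    ∧ (∀ (r : ℝ) (x y : CD n), x * (r • y) = r • (x * y))
  | 0 => ⟨fun r x y => (smul_mul_assoc (α := ℝ) (β := ℝ) r x y : _), fun r x y => (mul_smul_comm (α := ℝ) (β := ℝ) r x y : _)⟩
  | n + 1 => by
      obtain ⟨hl, hr⟩ := mul_smul_distrib (n := n)
      constructor
      · intro r x y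
        rw [mul_def, mul_def, smul_def]
        refine ext' ?_ ?_
        · show (r • x.1) * y.1 - conj y.2 * (r • x.2) = r • (x.1*y.1 - conj y.2 * x.2)
          rw [hl, hr, smul_sub]
        · show y.2 * (r • x.1) + (r • x.2) * conj y.1 = r • (y.2*x.1 + x.2*conj y.1)
          rw [hl, hr, smul_add]
      · intro r x y
        rw [mul_def, mul_def, smul_def]
        refine ext' ?_ ?_
        · show x.1 * (r • y.1) - conj (r • y.2) * x.2 = r • (x.1*y.1 - conj y.2 * x.2)
          rw [hr, conj_smul, hl, smul_sub]
        · show (r • y.2) * x.1 + x.2 * conj (r • y.1) = r • (y.2*x.1 + x.2*conj y.1)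
          rw [hl, conj_smul, hr, smul_add]

lemma smul_mul' {n : ℕ} (r : ℝ) (x y : CD n) : (r • x) * y = r • (x * y) :=
  mul_smul_distrib.1 r x y
lemma mul_smul' {n : ℕ} (r : ℝ) (x y : CD n) : x * (r • y) = r • (x * y) :=
  mul_smul_distrib.2 r x y

lemma neg_mul' {n : ℕ} (x y : CD n) : (-x) * y = -(x * y) := by
  rw [← neg_one_smul ℝ x, smul_mul', neg_one_smul]
lemma mul_neg' {n : ℕ} (x y : CD n) : x * (-y) = -(x * y) := by
  rw [← neg_one_smul ℝ y, mul_smul', neg_one_smul]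
lemma sub_mul' {n : ℕ} (x y z : CD n) : (x - y) * z = x * z - y * z := by
  rw [sub_eq_add_neg, add_mul', neg_mul', sub_eq_add_neg]
lemma mul_sub' {n : ℕ} (x y z : CD n) : x * (y - z) = x * y - x * z := by
  rw [sub_eq_add_neg, mul_add', mul_neg', sub_eq_add_neg]

lemma conj_mul : ∀ {n : ℕ} (x y : CD n), conj (x * y) = conj y * conj x
  | 0, x, y => mul_comm (G := ℝ) x y
  | n + 1, x, y => by
      rw [mul_def, conj_def, conj_def]
      refine ext' ?_ ?_
      · show conj (x.1*y.1 - conj y.2 * x.2) = conj y.1 * conj x.1 - conj (-x.2) * (-y.2)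
        rw [conj_sub, conj_mul, conj_mul, conj_conj, conj_neg, neg_mul', mul_neg', neg_neg]
      · show -(y.2 * x.1 + x.2 * conj y.1) = -x.2 * conj y.1 + -y.2 * conj (conj x.1)
        rw [conj_conj, neg_mul', neg_mul']; abel


lemma inner_comm : ∀ {n : ℕ} (x y : CD n), inner x y = inner y x
  | 0, x, y => mul_comm (G := ℝ) x y
  | n + 1, x, y => by rw [inner_def, inner_def, inner_comm x.1, inner_comm x.2]

lemma inner_add_right : ∀ {n : ℕ} (x y z : CD n), inner x (y + z) = inner x y + inner x z
  | 0, x, y, z => mul_add (R := ℝ) x y z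
  | n + 1, x, y, z => by
      rw [inner_def, add_def]
      show inner x.1 (y.1 + z.1) + inner x.2 (y.2 + z.2) = _
      rw [inner_add_right, inner_add_right, inner_def, inner_def]; ring

lemma inner_smul_right : ∀ {n : ℕ} (r : ℝ) (x y : CD n), inner x (r • y) = r * inner x y
  | 0, r, x, y => (mul_left_comm (G := ℝ) x r y : _)
  | n + 1, r, x, y => by
      rw [inner_def, smul_def]
      show inner x.1 (r • y.1) + inner x.2 (r • y.2) = _
      rw [inner_smul_right, inner_smul_right, inner_def]; ring

lemma inner_zero_right : ∀ {n : ℕ} (x : CD n), inner x (0 : CD n) = 0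
  | 0, x => MulZeroClass.mul_zero (M₀ := ℝ) x
  | n + 1, x => by
      rw [inner_def]
      show inner x.1 (0 : CD n) + inner x.2 (0 : CD n) = 0
      rw [inner_zero_right, inner_zero_right]; ring

lemma inner_zero_left {n : ℕ} (x : CD n) : inner (0 : CD n) x = 0 := by
  rw [inner_comm, inner_zero_right]

lemma inner_add_left {n : ℕ} (x y z : CD n) : inner (x + y) z = inner x z + inner y z := by
  rw [inner_comm, inner_add_right, inner_comm z, inner_comm z]

lemma inner_smul_left {n : ℕ} (r : ℝ) (x y : CD n) : inner (r • x) y = r * inner x y := by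
  rw [inner_comm, inner_smul_right, inner_comm]

lemma inner_neg_right {n : ℕ} (x y : CD n) : inner x (-y) = -inner x y := by
  rw [← neg_one_smul ℝ y, inner_smul_right]; ring

lemma inner_sub_right {n : ℕ} (x y z : CD n) : inner x (y - z) = inner x y - inner x z := by
  rw [sub_eq_add_neg, inner_add_right, inner_neg_right, sub_eq_add_neg]

lemma inner_conj : ∀ {n : ℕ} (x y : CD n), inner (conj x) (conj y) = inner x y
  | 0, x, y => rfl
  | n + 1, x, y => by
      rw [inner_def, conj_def, conj_def]
      show inner (conj x.1) (conj y.1) + inner (-x.2) (-y.2) = _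
      rw [inner_conj, inner_neg_right, inner_comm (-x.2), inner_neg_right, inner_comm y.2,
        inner_def]
      ring

lemma inner_one_one : ∀ {n : ℕ}, inner (1 : CD n) (1 : CD n) = 1
  | 0 => one_mul (M := ℝ) 1
  | n + 1 => by
      rw [inner_def, one_def]
      show inner (1 : CD n) 1 + inner (0 : CD n) 0 = 1
      rw [inner_one_one, inner_zero_left]; ring

/-- The fundamental polarization identity. -/
lemma mul_conj_key : ∀ {n : ℕ} (x y : CD n),
    x * conj y + y * conj x = (2 * inner x y) • (1 : CD n)
  | 0, x, y => by
      show _ = (2 * inner x y) * (1 : ℝ)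
      rw [mul_def0, mul_def0, conj_def0, conj_def0, inner_def0, add_def0]
      exact (by intro u v; ring : ∀ u v : ℝ, u * v + v * u = 2 * (u * v) * 1) x y
  | n + 1, x, y => by
      rw [conj_def, conj_def]
      refine ext' ?_ ?_
      · show (x.1 * conj y.1 - conj (-y.2) * x.2) + (y.1 * conj x.1 - conj (-x.2) * y.2) = _
        rw [conj_neg, conj_neg, neg_mul', neg_mul']
        have k1 := mul_conj_key x.1 y.1
        have k2 := mul_conj_key (conj y.2) (conj x.2)
        rw [conj_conj, conj_conj, inner_conj, inner_comm y.2] at k2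
        show _ = (2 * (inner x.1 y.1 + inner x.2 y.2)) • (1 : CD n)
        calc (x.1 * conj y.1 - -(conj y.2 * x.2)) + (y.1 * conj x.1 - -(conj x.2 * y.2))
            = (x.1 * conj y.1 + y.1 * conj x.1) + (conj y.2 * x.2 + conj x.2 * y.2) := by abel
          _ = (2 * inner x.1 y.1) • (1 : CD n) + (2 * inner x.2 y.2) • (1 : CD n) := by
              rw [k1, k2]
          _ = (2 * (inner x.1 y.1 + inner x.2 y.2)) • (1 : CD n) := by
              rw [← add_smul]; ring_nf
      · show (-y.2 * x.1 + x.2 * conj (conj y.1)) + (-x.2 * y.1 + y.2 * conj (conj x.1)) = _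
        rw [conj_conj, conj_conj, neg_mul', neg_mul']
        show _ = (2 * (inner x.1 y.1 + inner x.2 y.2)) • (0 : CD n)
        rw [smul_zero]; abel

lemma mul_conj_self {n : ℕ} (x : CD n) : x * conj x = inner x x • (1 : CD n) := by
  have h := mul_conj_key x x
  have h2 : (2:ℝ) • (x * conj x) = (2:ℝ) • (inner x x • (1 : CD n)) := by
    rw [two_smul, h, smul_smul]
  have := congrArg (fun z => ((2:ℝ)⁻¹) • z) h2
  simpa [smul_smul] using this

/-- The real part. -/
def re {n : ℕ} (x : CD n) : ℝ := inner 1 x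

lemma re_one {n : ℕ} : re (1 : CD n) = 1 := inner_one_one
lemma re_zero {n : ℕ} : re (0 : CD n) = 0 := inner_zero_right 1
lemma re_add {n : ℕ} (x y : CD n) : re (x + y) = re x + re y := inner_add_right 1 x y
lemma re_neg {n : ℕ} (x : CD n) : re (-x) = -re x := inner_neg_right 1 x
lemma re_sub {n : ℕ} (x y : CD n) : re (x - y) = re x - re y := inner_sub_right 1 x y
lemma re_smul {n : ℕ} (r : ℝ) (x : CD n) : re (r • x) = r * re x := inner_smul_right r 1 x
lemma re_smul_one {n : ℕ} (r : ℝ) : re (r • (1 : CD n)) = r := by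
  rw [re_smul, re_one, mul_one]
lemma re_conj {n : ℕ} (x : CD n) : re (conj x) = re x := by
  rw [re, ← conj_one, inner_conj]; rfl

lemma self_add_conj {n : ℕ} (x : CD n) : x + conj x = (2 * re x) • (1 : CD n) := by
  have := mul_conj_key x 1
  rwa [conj_one, mul_one', one_mul', inner_comm, ← re] at this

lemma re_mul_conj {n : ℕ} (x y : CD n) : re (x * conj y) = inner x y := by
  have h := congrArg re (mul_conj_key x y)
  rw [re_add, re_smul_one] at h
  have h2 : re (y * conj x) = re (x * conj y) := by
    rw [← re_conj (y * conj x), conj_mul, conj_conj]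
  rw [h2] at h; linarith

lemma re_mul_comm {n : ℕ} (x y : CD n) : re (x * y) = re (y * x) := by
  have h1 : re (x * y) = inner x (conj y) := by rw [← re_mul_conj x (conj y), conj_conj]
  have h2 : re (y * x) = inner y (conj x) := by rw [← re_mul_conj y (conj x), conj_conj]
  rw [h1, h2, ← inner_conj y (conj x), conj_conj, inner_comm]

lemma re_pair {n : ℕ} (w : CD (n + 1)) : re w = re w.1 := by
  show inner (1 : CD (n+1)) w = _
  rw [inner_def, one_def]
  show inner (1 : CD n) w.1 + inner (0 : CD n) w.2 = _
  rw [inner_zero_left, re]; ring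


lemma mul_fst {n : ℕ} (x y : CD (n+1)) : (x*y).1 = x.1*y.1 - conj y.2 * x.2 := rfl
lemma mul_snd {n : ℕ} (x y : CD (n+1)) : (x*y).2 = y.2*x.1 + x.2*conj y.1 := rfl

/-- The trace form is associative. -/
lemma re_assoc : ∀ {n : ℕ} (x y z : CD n), re ((x*y)*z) = re (x*(y*z))
  | 0, x, y, z => congrArg re (mul_assoc (G := ℝ) x y z)
  | n + 1, x, y, z => by
      have rot : ∀ u v w : CD n, re ((u*v)*w) = re ((w*u)*v) := fun u v w => by
        rw [re_assoc u v w, re_mul_comm u (v*w), re_assoc v w u, re_mul_comm v (w*u)]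
      rw [re_pair, re_pair]
      simp only [mul_fst, mul_snd, sub_mul', mul_sub', add_mul', mul_add', conj_add,
        conj_mul, conj_conj, re_sub, re_add, re_neg]
      have e0 := re_assoc x.1 y.1 z.1
      have e1 := rot (conj y.2) x.2 z.1
      have e2 : re (conj z.2 * (y.2 * x.1)) = re (x.1 * (conj z.2 * y.2)) := by
        rw [re_mul_comm (conj z.2) (y.2*x.1), rot y.2 x.1 (conj z.2),
          re_mul_comm (conj z.2 * y.2) x.1]
      have e3 : re (conj z.2 * (x.2 * conj y.1)) = re ((conj y.1 * conj z.2) * x.2) := by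
        rw [re_mul_comm (conj z.2) (x.2 * conj y.1), ← rot (conj y.1) (conj z.2) x.2]
      linarith

end CD

/-- For `n ≥ 4`, doubly pure `a, b` of norm one with `b ∈ H a ^ ⊥`,
`(a,a,b) = 0` and `(a,b,b) = 0`, the real-linear map `ℍ → A n` with `1 ↦ e₀`,
`i ↦ a`, `j ↦ b`, `k ↦ a·b` is an injective ℝ-algebra homomorphism, and its image
is the span of `{e₀, a, b, a·b}`, a subalgebra isomorphic to `ℍ`. -/
theorem quaternion_embedding_of_strongly_alternate (n : ℕ) (hn : 4 ≤ n + 1)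
    (a b : CD (n + 1)) (ha : CD.IsDoublyPure a) (hb : CD.IsDoublyPure b)
    (hna : CD.norm a = 1) (hnb : CD.norm b = 1) (hperp : b ∈ CD.Hperp a)
    (h1 : CD.assoc a a b = 0) (h2 : CD.assoc a b b = 0) :
    ∃ φ : ℍ → CD (n + 1),
      (∀ q : ℍ, φ q =
        q.re • (1 : CD (n + 1)) + q.imI • a + q.imJ • b + q.imK • (a * b)) ∧
      Function.Injective φ ∧
      φ 1 = 1 ∧
      (∀ p q : ℍ, φ (p * q) = φ p * φ q) ∧
      (∀ p q : ℍ, φ (p + q) = φ p + φ q) ∧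
      (∀ (r : ℝ) (p : ℍ), φ (r • p) = r • φ p) ∧
      Set.range φ =
        (Submodule.span ℝ
          ({(1 : CD (n + 1)), a, b, a * b} : Set (CD (n + 1))) : Set (CD (n + 1))) := by
  classical
  -- conjugates
  have hca : CD.conj a = -a := by
    rw [CD.conj_def, CD.neg_def, ha.1]
  have hcb : CD.conj b = -b := by
    rw [CD.conj_def, CD.neg_def, hb.1]
  -- norms
  have hia : CD.inner a a = 1 := Real.sqrt_eq_one.mp hna
  have hib : CD.inner b b = 1 := Real.sqrt_eq_one.mp hnb
  have hiab0 : CD.inner a b = 0 := hperp a (Submodule.subset_span (by simp))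
  -- squares
  have haa : a * a = -1 := by
    have h := CD.mul_conj_self a
    rw [hca, CD.mul_neg', hia, one_smul] at h
    have := congrArg Neg.neg h
    simpa using this
  have hbb : b * b = -1 := by
    have h := CD.mul_conj_self b
    rw [hcb, CD.mul_neg', hib, one_smul] at h
    have := congrArg Neg.neg h
    simpa using this
  -- anticommutation
  have hba : b * a = -(a * b) := by
    have h := CD.mul_conj_key a b
    rw [hca, hcb, CD.mul_neg', CD.mul_neg', hiab0, mul_zero, zero_smul, ← neg_add] at h
    have h' : a * b + b * a = 0 := by
      have := congrArg Neg.neg h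
      simpa using this
    exact eq_neg_of_add_eq_zero_right h'
  have hab : a * b = -(b * a) := by rw [hba, neg_neg]
  -- associator consequences
  have h1' : (a * a) * b = a * (a * b) := sub_eq_zero.mp h1
  have h2' : (a * b) * b = a * (b * b) := sub_eq_zero.mp h2
  have haab : a * (a * b) = -b := by
    rw [← h1', haa, CD.neg_mul', CD.one_mul']
  have habb : (a * b) * b = -a := by
    rw [h2', hbb, CD.mul_neg', CD.mul_one']
  have hbaa : (b * a) * a = b * (a * a) := by
    have h := congrArg CD.conj h1'
    rw [CD.conj_mul, CD.conj_mul, CD.conj_mul, CD.conj_mul, hca, hcb] at h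
    simp only [CD.neg_mul', CD.mul_neg', neg_neg] at h
    exact (neg_injective h).symm
  have hbba : b * (b * a) = (b * b) * a := by
    have h := congrArg CD.conj h2'
    rw [CD.conj_mul, CD.conj_mul, CD.conj_mul, CD.conj_mul, hca, hcb] at h
    simp only [CD.neg_mul', CD.mul_neg', neg_neg] at h
    exact neg_injective h
  have haba : (a * b) * a = b := by
    rw [hab, CD.neg_mul', hbaa, haa, CD.mul_neg', CD.mul_one', neg_neg]
  have hbab : b * (a * b) = a := by
    rw [hab, CD.mul_neg', hbba, hbb, CD.neg_mul', CD.one_mul', neg_neg]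
  have hcab : CD.conj (a * b) = b * a := by
    rw [CD.conj_mul, hca, hcb, CD.neg_mul', CD.mul_neg', neg_neg]
  have hiabab : CD.inner (a * b) (a * b) = 1 := by
    have h := CD.re_mul_conj (a * b) (a * b)
    rw [hcab, ← CD.re_assoc (a*b) b a, habb, CD.neg_mul', CD.re_neg, haa, CD.re_neg,
      CD.re_one] at h
    linarith
  have habab : (a * b) * (a * b) = -1 := by
    have h := CD.mul_conj_self (a * b)
    rw [hcab, hba, CD.mul_neg', hiabab, one_smul] at h
    have := congrArg Neg.neg h
    simpa using this
  -- real parts vanish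
  have hre_a : CD.re a = 0 := by
    have h' : (2 * CD.re a) • (1 : CD (n+1)) = 0 := by
      rw [← CD.self_add_conj a, hca]; abel
    have := congrArg CD.re h'
    rw [CD.re_smul_one, CD.re_zero] at this
    linarith
  have hre_b : CD.re b = 0 := by
    have h' : (2 * CD.re b) • (1 : CD (n+1)) = 0 := by
      rw [← CD.self_add_conj b, hcb]; abel
    have := congrArg CD.re h'
    rw [CD.re_smul_one, CD.re_zero] at this
    linarith
  have hre_ab : CD.re (a * b) = 0 := by
    have h := CD.re_mul_conj a (CD.conj b)
    rw [CD.conj_conj, hcb, CD.inner_neg_right, hiab0] at h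
    simpa using h
  -- remaining Gram entries
  have hia_ab : CD.inner a (a * b) = 0 := by
    have h := CD.re_mul_conj a (a * b)
    rw [hcab, CD.re_mul_comm a (b * a), CD.re_assoc b a a, haa, CD.mul_neg', CD.mul_one',
      CD.re_neg, hre_b] at h
    linarith
  have hib_ab : CD.inner b (a * b) = 0 := by
    have h := CD.re_mul_conj b (a * b)
    rw [hcab, ← CD.re_assoc b b a, hbb, CD.neg_mul', CD.one_mul', CD.re_neg, hre_a] at h
    linarith
  -- the map
  set φ : ℍ → CD (n + 1) := fun q =>
    q.re • (1 : CD (n + 1)) + q.imI • a + q.imJ • b + q.imK • (a * b) with hφ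
  have hone : φ 1 = 1 := by
    simp [hφ]
  have hadd : ∀ p q : ℍ, φ (p + q) = φ p + φ q := by
    intro p q
    simp only [hφ, Quaternion.re_add, Quaternion.imI_add, Quaternion.imJ_add,
      Quaternion.imK_add, add_smul]
    abel
  have hsmul : ∀ (r : ℝ) (p : ℍ), φ (r • p) = r • φ p := by
    intro r p
    simp only [hφ, Quaternion.re_smul, Quaternion.imI_smul, Quaternion.imJ_smul,
      Quaternion.imK_smul, smul_eq_mul, smul_add, smul_smul]
  have hsub : ∀ p q : ℍ, φ (p - q) = φ p - φ q := by
    intro p q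
    simp only [hφ, Quaternion.re_sub, Quaternion.imI_sub, Quaternion.imJ_sub,
      Quaternion.imK_sub, sub_smul]
    abel
  have hmul : ∀ p q : ℍ, φ (p * q) = φ p * φ q := by
    intro p q
    simp only [hφ, Quaternion.re_mul, Quaternion.imI_mul, Quaternion.imJ_mul,
      Quaternion.imK_mul, CD.add_mul', CD.mul_add', CD.smul_mul', CD.mul_smul',
      haa, hbb, hba, haab, habb, haba, hbab, habab, CD.mul_one', CD.one_mul',
      smul_neg, smul_smul, add_smul, sub_smul]
    module
  -- injectivity
  have hzero : ∀ q : ℍ, φ q = 0 → q = 0 := by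
    intro q hq
    have e1 := congrArg (CD.inner (1 : CD (n+1))) hq
    have e2 := congrArg (CD.inner a) hq
    have e3 := congrArg (CD.inner b) hq
    have e4 := congrArg (CD.inner (a * b)) hq
    have g1a : CD.inner (1 : CD (n+1)) a = 0 := hre_a
    have g1b : CD.inner (1 : CD (n+1)) b = 0 := hre_b
    have g1k : CD.inner (1 : CD (n+1)) (a*b) = 0 := hre_ab
    have ga1 : CD.inner a (1 : CD (n+1)) = 0 := by rw [CD.inner_comm]; exact g1a
    have gb1 : CD.inner b (1 : CD (n+1)) = 0 := by rw [CD.inner_comm]; exact g1b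
    have gk1 : CD.inner (a*b) (1 : CD (n+1)) = 0 := by rw [CD.inner_comm]; exact g1k
    have gba : CD.inner b a = 0 := by rw [CD.inner_comm]; exact hiab0
    have gka : CD.inner (a*b) a = 0 := by rw [CD.inner_comm]; exact hia_ab
    have gkb : CD.inner (a*b) b = 0 := by rw [CD.inner_comm]; exact hib_ab
    simp only [hφ, CD.inner_add_right, CD.inner_smul_right, CD.inner_zero_right,
      CD.inner_one_one, g1a, g1b, g1k, ga1, gb1, gk1, gba, gka, gkb, hia, hib,
      hiab0, hia_ab, hib_ab, hiabab, mul_one, mul_zero, add_zero, zero_add] at e1 e2 e3 e4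
    ext <;> simp [e1, e2, e3, e4]
  have hinj : Function.Injective φ := by
    intro p q hpq
    have h0 : φ (p - q) = 0 := by rw [hsub, hpq, sub_self]
    have := hzero _ h0
    exact sub_eq_zero.mp this
  refine ⟨φ, fun q => rfl, hinj, hone, hmul, hadd, hsmul, ?_⟩
  apply Set.Subset.antisymm
  · rintro x ⟨q, rfl⟩
    have m1 : (1 : CD (n+1)) ∈ Submodule.span ℝ ({1, a, b, a*b} : Set (CD (n+1))) :=
      Submodule.subset_span (by simp)
    have m2 : a ∈ Submodule.span ℝ ({1, a, b, a*b} : Set (CD (n+1))) :=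
      Submodule.subset_span (by simp)
    have m3 : b ∈ Submodule.span ℝ ({1, a, b, a*b} : Set (CD (n+1))) :=
      Submodule.subset_span (by simp)
    have m4 : a * b ∈ Submodule.span ℝ ({1, a, b, a*b} : Set (CD (n+1))) :=
      Submodule.subset_span (by simp)
    exact add_mem (add_mem (add_mem (Submodule.smul_mem _ _ m1) (Submodule.smul_mem _ _ m2))
      (Submodule.smul_mem _ _ m3)) (Submodule.smul_mem _ _ m4)
  · intro x hx
    have hx' : x ∈ Submodule.span ℝ ({1, a, b, a*b} : Set (CD (n+1))) := hx
    clear hx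
    induction hx' using Submodule.span_induction with
    | mem y hy =>
        rcases hy with rfl | rfl | rfl | rfl
        · exact ⟨1, hone⟩
        · exact ⟨⟨0, 1, 0, 0⟩, by simp [hφ]⟩
        · exact ⟨⟨0, 0, 1, 0⟩, by simp [hφ]⟩
        · exact ⟨⟨0, 0, 0, 1⟩, by simp [hφ]⟩
    | zero => exact ⟨0, by simp [hφ]⟩
    | add y z _ _ hy hz =>
        obtain ⟨p, rfl⟩ := hy
        obtain ⟨q, rfl⟩ := hz
        exact ⟨p + q, hadd p q⟩
    | smul r y _ hy =>
        obtain ⟨p, rfl⟩ := hy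
        exact ⟨r • p, hsmul r p⟩
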